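/- Let k be a field of characteristic p > 0, let A = (Z/p)^n be an elementary abelian p-group, so kA ≅ k[x_1,…,x_n]/(x_1^p,…,x_n^p), and let α = (α_1,…,α_n) ∈ k^n be nonzero. Then the k-algebra homomorphism π_α : k[t]/(t^p) → k[x_1,…,x_n]/(x_1^p,…,x_n^p) determined by t ↦ Σ_i α_i x_i is well-defined and makes kA into a free (hence flat) module over k[t]/(t^p). -/

import Mathlib

open MvPolynomial

set_option maxHeartbeats 4000000
set_option synthInstance.maxHeartbeats 1000000
set_option linter.unusedSectionVars false

namespace PiPointAux

section Combinatorics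

variable {p n : ℕ}

/-- exponent Finsupp of a bounded exponent vector -/
noncomputable def expo (p : ℕ) {n : ℕ} (m : Fin n → Fin p) : Fin n →₀ ℕ :=
  Finsupp.equivFunOnFinite.symm fun i => (m i : ℕ)

@[simp] theorem expo_apply (m : Fin n → Fin p) (i : Fin n) : expo p m i = m i := rfl

theorem expo_injective : Function.Injective (expo p (n := n)) := fun a b h =>
  funext fun i => Fin.ext (by simpa using congrArg (fun f : Fin n →₀ ℕ => f i) h)

/-- splitting off the `i₀` coordinate -/
def splitEquiv (p : ℕ) {n : ℕ} (i₀ : Fin n) :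
    (({j : Fin n // j ≠ i₀} → Fin p) × Fin p) ≃ (Fin n → Fin p) where
  toFun mj l := if h : l = i₀ then mj.2 else mj.1 ⟨l, h⟩
  invFun m := (fun l => m l.1, m i₀)
  left_inv mj := by
    refine Prod.ext (funext fun l => ?_) (by simp)
    simp only [dif_neg l.2, Subtype.coe_eta]
  right_inv m := by
    funext l
    by_cases h : l = i₀ <;> simp [h]

theorem splitEquiv_at (p : ℕ) {n : ℕ} (i₀ : Fin n) (m : {j : Fin n // j ≠ i₀} → Fin p) (j : Fin p) :
    splitEquiv p i₀ (m, j) i₀ = j := dif_pos rfl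

theorem splitEquiv_ne (p : ℕ) {n : ℕ} (i₀ : Fin n) (m : {j : Fin n // j ≠ i₀} → Fin p) (j : Fin p)
    {l : Fin n} (h : l ≠ i₀) : splitEquiv p i₀ (m, j) l = m ⟨l, h⟩ := dif_neg h

theorem expo_split {p n : ℕ} (i₀ : Fin n) (m : {j : Fin n // j ≠ i₀} → Fin p) (j j0 : Fin p)
    (hj0 : (j0 : ℕ) = 0) :
    Finsupp.single i₀ (j : ℕ) + expo p (splitEquiv p i₀ (m, j0)) = expo p (splitEquiv p i₀ (m, j)) := by
  ext l
  rw [Finsupp.add_apply]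
  by_cases h : l = i₀
  · subst h
    rw [Finsupp.single_eq_same, expo_apply, expo_apply, splitEquiv_at, splitEquiv_at, hj0, add_zero]
  · rw [Finsupp.single_apply, if_neg (fun hh => h hh.symm), expo_apply, expo_apply,
      splitEquiv_ne _ _ _ _ h, splitEquiv_ne _ _ _ _ h, zero_add]

end Combinatorics

variable {k : Type*} [Field k] {p : ℕ} [Fact p.Prime] [CharP k p] {n : ℕ}

/-- The ideal `(X i ^ p)`. -/
noncomputable abbrev Ik (k : Type*) [Field k] (p n : ℕ) : Ideal (MvPolynomial (Fin n) k) :=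
  Ideal.span (Set.range fun i : Fin n => (X i : MvPolynomial (Fin n) k) ^ p)

theorem mem_Ik_iff {f : MvPolynomial (Fin n) k} :
    f ∈ Ik k p n ↔ ∀ d ∈ f.support, ∃ i, p ≤ d i := by
  have h : (Set.range fun i : Fin n => (X i : MvPolynomial (Fin n) k) ^ p)
      = (fun e => monomial e (1 : k)) '' (Set.range fun i : Fin n => Finsupp.single i p) := by
    rw [← Set.range_comp]
    simp only [X_pow_eq_monomial]
    rfl
  rw [Ik, h, mem_ideal_span_monomial_image]
  simp [Finsupp.single_le_iff]

theorem sum_pow_mem (β : Fin n → k) :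
    (∑ i, C (β i) * X i : MvPolynomial (Fin n) k) ^ p ∈ Ik k p n := by
  rw [sum_pow_char]
  refine Ideal.sum_mem _ fun i _ => ?_
  rw [mul_pow, ← map_pow]
  exact Ideal.mul_mem_left _ _ (Ideal.subset_span ⟨i, rfl⟩)

theorem smul_mk (c : k) (x : MvPolynomial (Fin n) k) :
    c • Ideal.Quotient.mk (Ik k p n) x = Ideal.Quotient.mk _ (C c * x) := by
  have h := map_smul (Ideal.Quotient.mkₐ k (Ik k p n)) c x
  simp only [Ideal.Quotient.mkₐ_eq_mk] at h
  rw [← h, MvPolynomial.smul_eq_C_mul]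

/-- the monomial family in the quotient -/
noncomputable def basisFun (k : Type*) [Field k] (p n : ℕ) [Field k] (m : Fin n → Fin p) :
    MvPolynomial (Fin n) k ⧸ Ik k p n :=
  Ideal.Quotient.mk _ (monomial (expo p m) 1)

theorem basisFun_li : LinearIndependent k (basisFun k p n) := by
  rw [Fintype.linearIndependent_iff]
  intro g hg
  set f : MvPolynomial (Fin n) k := ∑ m : Fin n → Fin p, monomial (expo p m) (g m) with hf
  have hmk : Ideal.Quotient.mk (Ik k p n) f = 0 := by
    rw [hf, map_sum, ← hg]
    refine Finset.sum_congr rfl fun m _ => ?_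
    rw [basisFun, smul_mk, C_mul_monomial, mul_one]
  have hfI : f ∈ Ik k p n := Ideal.Quotient.eq_zero_iff_mem.mp hmk
  intro m₀
  by_contra hm₀
  have hcoeff : coeff (expo p m₀) f = g m₀ := by
    rw [hf, MvPolynomial.coeff_sum, Finset.sum_eq_single m₀]
    · rw [coeff_monomial, if_pos rfl]
    · intro b _ hb
      rw [coeff_monomial, if_neg fun h => hb (expo_injective h)]
    · simp
  have hsupp : expo p m₀ ∈ f.support := by
    rw [mem_support_iff, hcoeff]; exact hm₀
  obtain ⟨i, hi⟩ := mem_Ik_iff.mp hfI _ hsupp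
  rw [expo_apply] at hi
  exact absurd hi (Nat.not_le.mpr (m₀ i).isLt)

theorem basisFun_span :
    ⊤ ≤ Submodule.span k (Set.range (basisFun k p n)) := by
  intro q _
  obtain ⟨f, rfl⟩ := Ideal.Quotient.mk_surjective q
  rw [← support_sum_monomial_coeff f, map_sum]
  refine Submodule.sum_mem _ fun d _ => ?_
  by_cases hd : ∀ i, d i < p
  · have : Ideal.Quotient.mk (Ik k p n) (monomial d (coeff d f))
        = coeff d f • basisFun k p n (fun i => ⟨d i, hd i⟩) := by
      have hde : expo p (fun i => (⟨d i, hd i⟩ : Fin p)) = d := Finsupp.ext fun i => rfl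
      rw [basisFun, smul_mk, C_mul_monomial, mul_one, hde]
    rw [this]
    exact Submodule.smul_mem _ _ (Submodule.subset_span ⟨_, rfl⟩)
  · push_neg at hd
    obtain ⟨i, hi⟩ := hd
    have hmem : monomial d (coeff d f) ∈ Ik k p n := mem_Ik_iff.mpr (by
      intro d' hd'
      have : d' = d := by
        have := MvPolynomial.support_monomial_subset hd'
        simpa using this
      exact ⟨i, this ▸ hi⟩)
    rw [Ideal.Quotient.eq_zero_iff_mem.mpr hmem]
    exact Submodule.zero_mem _

/-- `k`-basis of the quotient given by monomials with exponents `< p`. -/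
noncomputable def kBasis (k : Type*) [Field k] (p n : ℕ) [Fact p.Prime] [CharP k p] : Module.Basis (Fin n → Fin p) k (MvPolynomial (Fin n) k ⧸ Ik k p n) :=
  Module.Basis.mk basisFun_li basisFun_span

@[simp] theorem kBasis_apply (m : Fin n → Fin p) : kBasis k p n m = basisFun k p n m := by
  rw [kBasis, Module.Basis.mk_apply]

open Polynomial in
theorem Rp_span (r : Polynomial k ⧸ Ideal.span {(Polynomial.X : Polynomial k) ^ p}) :
    ∃ c : Fin p → k,
      r = ∑ j : Fin p, c j •
        (Ideal.Quotient.mk (Ideal.span {(Polynomial.X : Polynomial k) ^ p}) Polynomial.X) ^ (j : ℕ) := by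
  obtain ⟨f, rfl⟩ := Ideal.Quotient.mk_surjective r
  have hp0 : 0 < p := (Fact.out : p.Prime).pos
  have hmonic : ((Polynomial.X : Polynomial k) ^ p).Monic := monic_X_pow p
  have hmod : Ideal.Quotient.mk (Ideal.span {(Polynomial.X : Polynomial k) ^ p}) f
      = Ideal.Quotient.mk _ (f %ₘ (Polynomial.X ^ p)) := by
    rw [Ideal.Quotient.eq, modByMonic_eq_sub_mul_div f _, sub_sub_cancel]
    exact Ideal.mem_span_singleton.mpr (dvd_mul_right _ _)
  have hdeg : (f %ₘ (Polynomial.X ^ p)).natDegree < p := by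
    by_cases h0 : f %ₘ (Polynomial.X ^ p) = 0
    · simpa [h0] using hp0
    · rw [Polynomial.natDegree_lt_iff_degree_lt h0]
      simpa [Polynomial.degree_X_pow] using degree_modByMonic_lt f hmonic
  refine ⟨fun j => (f %ₘ (Polynomial.X ^ p)).coeff j, ?_⟩
  rw [hmod]
  conv_lhs => rw [(f %ₘ (Polynomial.X ^ p)).as_sum_range' p hdeg]
  rw [map_sum, ← Fin.sum_univ_eq_sum_range]
  refine Finset.sum_congr rfl fun j _ => ?_
  rw [← Polynomial.C_mul_X_pow_eq_monomial, map_mul, map_pow]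
  exact (Algebra.smul_def (R := k) (A := Polynomial k ⧸ Ideal.span {(Polynomial.X : Polynomial k) ^ p}) _ _).symm

end PiPointAux
theorem PiPointAux.free_of_basis_pow
    {k : Type*} [Field k] {p : ℕ}
    {R Q : Type*} [CommRing R] [CommRing Q] [Algebra k R] [Algebra k Q]
    (t : R) (hRspan : ∀ r : R, ∃ c : Fin p → k, r = ∑ j : Fin p, c j • t ^ (j : ℕ))
    (φ : R →ₐ[k] Q)
    {ι : Type*} [Fintype ι] (U : ι → Q)
    (b : Module.Basis (ι × Fin p) k Q)
    (hb : ∀ m j, b (m, j) = φ (t ^ (j : ℕ)) * U m) :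
    letI := φ.toRingHom.toAlgebra
    letI := Algebra.toModule (R := R) (A := Q)
    Module.Free R Q ∧ Module.Flat R Q := by
  letI : Algebra R Q := φ.toRingHom.toAlgebra
  have smul_def : ∀ (r : R) (q : Q), r • q = φ r * q := fun r q => by
    rw [Algebra.smul_def, RingHom.algebraMap_toAlgebra]; rfl
  haveI : IsScalarTower k R Q := ⟨fun c r q => by
    rw [smul_def, smul_def, map_smul, smul_mul_assoc]⟩
  have hb' : ∀ m j, b (m, j) = (t ^ (j : ℕ)) • U m := fun m j => by
    rw [smul_def, hb]
  have hLI : LinearIndependent R U := by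
    rw [Fintype.linearIndependent_iff]
    intro g hg
    choose c hc using fun m => hRspan (g m)
    have hsum : ∑ mj : ι × Fin p, c mj.1 mj.2 • b mj = 0 := by
      rw [Fintype.sum_prod_type]
      calc ∑ m, ∑ j : Fin p, c m j • b (m, j)
          = ∑ m, g m • U m := by
            refine Finset.sum_congr rfl fun m _ => ?_
            rw [hc m, Finset.sum_smul]
            refine Finset.sum_congr rfl fun j _ => ?_
            rw [hb' m j, smul_assoc]
        _ = 0 := hg
    have hzero := Fintype.linearIndependent_iff.mp b.linearIndependent
      (fun mj => c mj.1 mj.2) hsum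
    intro m
    rw [hc m]
    exact Finset.sum_eq_zero fun j _ => by
      rw [show c m j = (0 : k) from hzero (m, j), zero_smul]
  have hspan : ⊤ ≤ Submodule.span R (Set.range U) := by
    intro q _
    have hq : q ∈ Submodule.span k (Set.range b) := by rw [b.span_eq]; exact Submodule.mem_top
    have hsub : Submodule.span k (Set.range b) ≤
        (Submodule.span R (Set.range U)).restrictScalars k := by
      rw [Submodule.span_le]
      rintro x ⟨⟨m, j⟩, rfl⟩
      rw [SetLike.mem_coe, Submodule.restrictScalars_mem, hb' m j]
      exact Submodule.smul_mem _ _ (Submodule.subset_span ⟨m, rfl⟩)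
    exact hsub hq
  haveI hfree : Module.Free R Q := Module.Free.of_basis (Module.Basis.mk hLI hspan)
  exact ⟨hfree, Module.Flat.of_free⟩
open PiPointAux in
/-- For `k` a field of characteristic `p > 0`, `kA = k[x₁,…,xₙ]/(xᵢᵖ)` and `0 ≠ α ∈ kⁿ`,
the π-point `π_α : k[t]/(tᵖ) → kA`, `t ↦ ∑ αᵢ xᵢ`, is a well-defined `k`-algebra
homomorphism, and it makes `kA` a free (hence flat) module over `k[t]/(tᵖ)`. -/
theorem pi_point_well_defined_and_flat
    (k : Type*) [Field k] (p : ℕ) [Fact p.Prime] [CharP k p]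
    (n : ℕ) (α : Fin n → k) (hα : α ≠ 0) :
    ∃ φ : (Polynomial k ⧸ Ideal.span {(Polynomial.X : Polynomial k) ^ p}) →ₐ[k]
          (MvPolynomial (Fin n) k ⧸
            Ideal.span (Set.range fun i : Fin n => (MvPolynomial.X i : MvPolynomial (Fin n) k) ^ p)),
      φ (Ideal.Quotient.mk _ Polynomial.X) =
          Ideal.Quotient.mk _ (∑ i : Fin n, MvPolynomial.C (α i) * MvPolynomial.X i) ∧
      (letI := φ.toRingHom.toAlgebra
       letI := Algebra.toModule (R := Polynomial k ⧸ Ideal.span {(Polynomial.X : Polynomial k) ^ p})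
         (A := MvPolynomial (Fin n) k ⧸
           Ideal.span (Set.range fun i : Fin n => (MvPolynomial.X i : MvPolynomial (Fin n) k) ^ p))
       Module.Free (Polynomial k ⧸ Ideal.span {(Polynomial.X : Polynomial k) ^ p})
        (MvPolynomial (Fin n) k ⧸
          Ideal.span (Set.range fun i : Fin n => (MvPolynomial.X i : MvPolynomial (Fin n) k) ^ p)) ∧
       Module.Flat (Polynomial k ⧸ Ideal.span {(Polynomial.X : Polynomial k) ^ p})
        (MvPolynomial (Fin n) k ⧸
          Ideal.span (Set.range fun i : Fin n => (MvPolynomial.X i : MvPolynomial (Fin n) k) ^ p))) := by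
  classical
  obtain ⟨i₀, h₀⟩ : ∃ i, α i ≠ 0 := Function.ne_iff.mp hα
  have hp0 : 0 < p := (Fact.out : p.Prime).pos
  set y : MvPolynomial (Fin n) k ⧸ Ik k p n :=
    Ideal.Quotient.mk _ (∑ i : Fin n, MvPolynomial.C (α i) * MvPolynomial.X i) with hy_def
  have hy : y ^ p = 0 := by
    rw [hy_def, ← map_pow, Ideal.Quotient.eq_zero_iff_mem]
    exact sum_pow_mem α
  have hker : ∀ a ∈ Ideal.span {(Polynomial.X : Polynomial k) ^ p}, (Polynomial.aeval y) a = 0 := by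
    intro a ha
    obtain ⟨b, rfl⟩ := Ideal.mem_span_singleton.mp ha
    rw [map_mul, map_pow, Polynomial.aeval_X, hy, zero_mul]
  set φ : (Polynomial k ⧸ Ideal.span {(Polynomial.X : Polynomial k) ^ p}) →ₐ[k]
      (MvPolynomial (Fin n) k ⧸ Ik k p n) :=
    Ideal.Quotient.liftₐ (Ideal.span {(Polynomial.X : Polynomial k) ^ p}) (Polynomial.aeval y) hker
    with hφ_def
  have hφ_mk : ∀ f : Polynomial k, φ (Ideal.Quotient.mk _ f) = Polynomial.aeval y f := fun f => by
    rw [hφ_def, Ideal.Quotient.liftₐ_apply]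
    rfl
  refine ⟨φ, by rw [hφ_mk, Polynomial.aeval_X], ?_⟩
  -- the change-of-variables automorphism
  set u : Fin n → MvPolynomial (Fin n) k := fun j =>
    if j = i₀ then ∑ l : Fin n, MvPolynomial.C (α l) * MvPolynomial.X l else MvPolynomial.X j
    with hu
  set v : Fin n → MvPolynomial (Fin n) k := fun j =>
    if j = i₀ then MvPolynomial.C (α i₀)⁻¹ *
      (MvPolynomial.X i₀ - ∑ l ∈ Finset.univ.erase i₀, MvPolynomial.C (α l) * MvPolynomial.X l)
    else MvPolynomial.X j with hv
  have hu_pos : u i₀ = ∑ l : Fin n, MvPolynomial.C (α l) * MvPolynomial.X l := by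
    rw [hu]; simp
  have hu_neg : ∀ j, j ≠ i₀ → u j = MvPolynomial.X j := fun j hj => by rw [hu]; simp [hj]
  have hv_pos : v i₀ = MvPolynomial.C (α i₀)⁻¹ *
      (MvPolynomial.X i₀ - ∑ l ∈ Finset.univ.erase i₀, MvPolynomial.C (α l) * MvPolynomial.X l) := by
    rw [hv]; simp
  have hv_neg : ∀ j, j ≠ i₀ → v j = MvPolynomial.X j := fun j hj => by rw [hv]; simp [hj]
  have hterm : ∀ (w : Fin n → MvPolynomial (Fin n) k) (l : Fin n),
      (MvPolynomial.aeval w) (MvPolynomial.C (α l) * MvPolynomial.X l)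
        = MvPolynomial.C (α l) * w l := by
    intro w l
    rw [map_mul, MvPolynomial.aeval_X, MvPolynomial.aeval_C, MvPolynomial.algebraMap_eq]
  have hS : (MvPolynomial.aeval u)
        (∑ l ∈ Finset.univ.erase i₀, MvPolynomial.C (α l) * MvPolynomial.X l)
      = ∑ l ∈ Finset.univ.erase i₀, MvPolynomial.C (α l) * MvPolynomial.X l := by
    rw [map_sum]
    refine Finset.sum_congr rfl fun l hl => ?_
    rw [hterm, hu_neg l (Finset.ne_of_mem_erase hl)]
  have hsv : (MvPolynomial.aeval v) (∑ l : Fin n, MvPolynomial.C (α l) * MvPolynomial.X l)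
      = MvPolynomial.X i₀ := by
    have e0 : (∑ l : Fin n, (MvPolynomial.aeval v) (MvPolynomial.C (α l) * MvPolynomial.X l))
        = ∑ l : Fin n, MvPolynomial.C (α l) * v l := Finset.sum_congr rfl fun l _ => hterm v l
    have e1 : (∑ l ∈ Finset.univ.erase i₀, MvPolynomial.C (α l) * v l)
        = ∑ l ∈ Finset.univ.erase i₀, MvPolynomial.C (α l) * MvPolynomial.X l :=
      Finset.sum_congr rfl fun l hl => by rw [hv_neg l (Finset.ne_of_mem_erase hl)]
    rw [map_sum, e0, ← Finset.add_sum_erase _ _ (Finset.mem_univ i₀), hv_pos, e1,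
      ← mul_assoc, ← MvPolynomial.C_mul, mul_inv_cancel₀ h₀, MvPolynomial.C_1, one_mul,
      sub_add_cancel]
  have hcomp1 : (MvPolynomial.aeval v).comp (MvPolynomial.aeval u)
      = AlgHom.id k (MvPolynomial (Fin n) k) := by
    apply MvPolynomial.algHom_ext
    intro j
    rw [AlgHom.comp_apply, MvPolynomial.aeval_X, AlgHom.id_apply]
    by_cases hj : j = i₀
    · subst hj; rw [hu_pos, hsv]
    · rw [hu_neg j hj, MvPolynomial.aeval_X, hv_neg j hj]
  have hcomp2 : (MvPolynomial.aeval u).comp (MvPolynomial.aeval v)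
      = AlgHom.id k (MvPolynomial (Fin n) k) := by
    apply MvPolynomial.algHom_ext
    intro j
    rw [AlgHom.comp_apply, MvPolynomial.aeval_X, AlgHom.id_apply]
    by_cases hj : j = i₀
    · subst hj
      rw [hv_pos, map_mul, map_sub, MvPolynomial.aeval_C, MvPolynomial.algebraMap_eq,
        MvPolynomial.aeval_X, hS, hu_pos, ← Finset.add_sum_erase _ _ (Finset.mem_univ j),
        add_sub_cancel_right, ← mul_assoc, ← MvPolynomial.C_mul, inv_mul_cancel₀ h₀,
        MvPolynomial.C_1, one_mul]
    · rw [hv_neg j hj, MvPolynomial.aeval_X, hu_neg j hj]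
  set E : MvPolynomial (Fin n) k ≃ₐ[k] MvPolynomial (Fin n) k :=
    AlgEquiv.ofAlgHom (MvPolynomial.aeval u) (MvPolynomial.aeval v) hcomp2 hcomp1 with hE
  have hEapp : ∀ x, E x = (MvPolynomial.aeval u) x := fun x => rfl
  have hEsymm : ∀ x, E.symm x = (MvPolynomial.aeval v) x := fun x => rfl
  have hle : ∀ (F : MvPolynomial (Fin n) k →+* MvPolynomial (Fin n) k),
      (∀ j, F (MvPolynomial.X j ^ p) ∈ Ik k p n) →
      (Ik k p n).map F ≤ Ik k p n := by
    intro F hF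
    rw [Ik, Ideal.map_span, Ideal.span_le]
    rintro x ⟨x', ⟨j, rfl⟩, rfl⟩
    exact hF j
  have hEX : ∀ j, E (MvPolynomial.X j ^ p) ∈ Ik k p n := by
    intro j
    rw [hEapp, map_pow, MvPolynomial.aeval_X]
    by_cases hj : j = i₀
    · subst hj; rw [hu_pos]; exact sum_pow_mem α
    · rw [hu_neg j hj]; exact Ideal.subset_span ⟨j, rfl⟩
  have hvX : ∀ j, E.symm (MvPolynomial.X j ^ p) ∈ Ik k p n := by
    intro j
    rw [hEsymm, map_pow, MvPolynomial.aeval_X]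
    by_cases hj : j = i₀
    · subst hj
      rw [hv_pos]
      have hrw : MvPolynomial.X j
            - ∑ l ∈ Finset.univ.erase j, MvPolynomial.C (α l) * MvPolynomial.X l
          = ∑ l : Fin n, MvPolynomial.C (if l = j then 1 else -(α l)) * MvPolynomial.X l := by
        rw [← Finset.add_sum_erase _ _ (Finset.mem_univ j), if_pos rfl, MvPolynomial.C_1, one_mul,
          sub_eq_add_neg]
        congr 1
        rw [← Finset.sum_neg_distrib]
        refine Finset.sum_congr rfl fun l hl => ?_
        rw [if_neg (Finset.ne_of_mem_erase hl), map_neg, neg_mul]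
      rw [hrw, mul_pow, ← map_pow]
      exact Ideal.mul_mem_left _ _ (sum_pow_mem _)
    · rw [hv_neg j hj]; exact Ideal.subset_span ⟨j, rfl⟩
  have hIE : Ik k p n = (Ik k p n).map (E : MvPolynomial (Fin n) k →+* MvPolynomial (Fin n) k) := by
    refine le_antisymm ?_ (hle _ fun j => hEX j)
    intro x hx
    have h1 : E.symm x ∈ Ik k p n :=
      hle (E.symm : MvPolynomial (Fin n) k →+* MvPolynomial (Fin n) k) (fun j => hvX j)
        (Ideal.mem_map_of_mem _ hx)
    have h2 : E (E.symm x) ∈ (Ik k p n).map (E : MvPolynomial (Fin n) k →+* MvPolynomial (Fin n) k) :=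
      Ideal.mem_map_of_mem _ h1
    rwa [AlgEquiv.apply_symm_apply] at h2
  set ψ : (MvPolynomial (Fin n) k ⧸ Ik k p n) ≃ₐ[k] (MvPolynomial (Fin n) k ⧸ Ik k p n) :=
    Ideal.quotientEquivAlg (Ik k p n) (Ik k p n) E hIE with hψ
  have hψ_mk : ∀ x, ψ (Ideal.Quotient.mk _ x) = Ideal.Quotient.mk _ (E x) := fun x => rfl
  have hψX : ψ (Ideal.Quotient.mk _ (MvPolynomial.X i₀)) = y := by
    rw [hψ_mk, hEapp, MvPolynomial.aeval_X, hu_pos, hy_def]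
  set t : Polynomial k ⧸ Ideal.span {(Polynomial.X : Polynomial k) ^ p} :=
    Ideal.Quotient.mk _ Polynomial.X with ht
  have hφt : ∀ j : ℕ, φ (t ^ j) = y ^ j := fun j => by
    rw [map_pow, ht, hφ_mk, Polynomial.aeval_X]
  have hRspan : ∀ r : Polynomial k ⧸ Ideal.span {(Polynomial.X : Polynomial k) ^ p},
      ∃ c : Fin p → k, r = ∑ j : Fin p, c j • t ^ (j : ℕ) := fun r => by
    obtain ⟨c, hcr⟩ := Rp_span (p := p) r
    exact ⟨c, by rw [ht]; exact hcr⟩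
  set U : ({l : Fin n // l ≠ i₀} → Fin p) → (MvPolynomial (Fin n) k ⧸ Ik k p n) := fun m =>
    ψ (Ideal.Quotient.mk _
      (MvPolynomial.monomial (expo p (splitEquiv p i₀ (m, ⟨0, hp0⟩))) (1 : k))) with hU
  have hUm : ∀ m, U m = ψ (Ideal.Quotient.mk _
      (MvPolynomial.monomial (expo p (splitEquiv p i₀ (m, ⟨0, hp0⟩))) (1 : k))) := fun m => rfl
  set b : Module.Basis ((({l : Fin n // l ≠ i₀} → Fin p)) × Fin p) k (MvPolynomial (Fin n) k ⧸ Ik k p n) :=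
    ((kBasis k p n).reindex (splitEquiv p i₀).symm).map ψ.toLinearEquiv with hb_def
  have hb : ∀ m j, b (m, j) = φ (t ^ (j : ℕ)) * U m := by
    intro m j
    have h1 : b (m, j) = ψ (Ideal.Quotient.mk _
        (MvPolynomial.monomial (expo p (splitEquiv p i₀ (m, j))) (1 : k))) := by
      rw [hb_def, Module.Basis.map_apply, Module.Basis.reindex_apply, Equiv.symm_symm, kBasis_apply,
        AlgEquiv.toLinearEquiv_apply]
      rfl
    have h2 : (Ideal.Quotient.mk (Ik k p n)
          (MvPolynomial.monomial (expo p (splitEquiv p i₀ (m, j))) (1 : k)))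
        = (Ideal.Quotient.mk (Ik k p n) (MvPolynomial.X i₀)) ^ (j : ℕ) *
          Ideal.Quotient.mk (Ik k p n)
            (MvPolynomial.monomial (expo p (splitEquiv p i₀ (m, ⟨0, hp0⟩))) (1 : k)) := by
      rw [← map_pow, ← map_mul, MvPolynomial.X_pow_eq_monomial, MvPolynomial.monomial_mul, one_mul,
        expo_split i₀ m j ⟨0, hp0⟩ rfl]
    rw [h1, h2, map_mul, map_pow, hψX, ← hUm m, hφt]
  exact free_of_basis_pow t hRspan φ U b hb
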